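/- arXiv:1006.4044 — 2 statements merged into one kernel-verified Lean document; each statement's English description precedes it below -/
import Mathlib

section
/- Let A be a unital C*-algebra, let π : A → B(H) be a representation with cyclic vector Ξ, let φ(a) = ⟨Ξ, π(a)Ξ⟩ be the associated vector functional, and let ε : A → ℂ be a character. Suppose there exists c > 0 such that φ(a*a) ≥ c·|ε(a)|² for all a ∈ A (i.e. φ − c·ε is a positive functional). Then there exists a unit vector v ∈ H such that π(a)v = ε(a)v for all a ∈ A. -/
open scoped InnerProductSpace ComplexOrder

/-- Let `A` be a unital C*-algebra, `π : A → B(H)` a representation with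
cyclic vector `Ξ`, `φ(a) = ⟪Ξ, π(a)Ξ⟫` the associated vector functional, and `ε : A → ℂ`
a character. If there is `c > 0` with `φ(a*a) ≥ c·|ε(a)|²` for all `a` (i.e. `φ − c·ε` is
positive), then there is a unit vector `v ∈ H` with `π(a)v = ε(a)v` for all `a`. -/
theorem stmt_8 {A : Type*} [NormedRing A] [StarRing A] [CStarRing A]
    [NormedAlgebra ℂ A] [StarModule ℂ A] [CompleteSpace A]
    {H : Type*} [NormedAddCommGroup H] [InnerProductSpace ℂ H] [CompleteSpace H]
    (π : A →⋆ₐ[ℂ] (H →L[ℂ] H)) (Ξ : H)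
    (hcyc : Dense (Set.range fun a : A => π a Ξ))
    (φ : A → ℂ) (hφ : ∀ a : A, φ a = ⟪Ξ, π a Ξ⟫_ℂ)
    (ε : A →⋆ₐ[ℂ] ℂ) (c : ℝ) (hc : 0 < c)
    (hdom : ∀ a : A, (c * ‖ε a‖ ^ 2 : ℂ) ≤ φ (star a * a)) :
    ∃ v : H, ‖v‖ = 1 ∧ ∀ a : A, π a v = ε a • v := by
  classical
  -- the linear map a ↦ π a Ξ
  set T : A →ₗ[ℂ] H :=
    { toFun := fun a => π a Ξ
      map_add' := by intro a b; simp [map_add]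
      map_smul' := by intro m a; simp [map_smul] } with hT
  -- key norm inequality
  have key : ∀ a : A, c * ‖ε a‖ ^ 2 ≤ ‖π a Ξ‖ ^ 2 := by
    intro a
    have h1 : φ (star a * a) = ⟪π a Ξ, π a Ξ⟫_ℂ := by
      rw [hφ, map_mul]
      have hadj : π (star a) = ContinuousLinearMap.adjoint (π a) := by
        rw [map_star]; rfl
      simp only [ContinuousLinearMap.mul_apply, hadj,
        ContinuousLinearMap.adjoint_inner_right]
    have h2 := hdom a
    rw [h1] at h2
    have := h2.1  -- real parts
    have e1 : ((c : ℂ) * (‖ε a‖ : ℂ) ^ 2).re = c * ‖ε a‖ ^ 2 := by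
      rw [← Complex.ofReal_pow, ← Complex.ofReal_mul, Complex.ofReal_re]
    have e2 : (⟪π a Ξ, π a Ξ⟫_ℂ).re = ‖π a Ξ‖ ^ 2 := inner_self_eq_norm_sq (𝕜 := ℂ) (π a Ξ)
    linarith [e1, e2, this]
  have keynorm : ∀ a : A, ‖ε a‖ ≤ Real.sqrt c⁻¹ * ‖π a Ξ‖ := by
    intro a
    have h := key a
    have h1 : ‖ε a‖ ^ 2 ≤ c⁻¹ * ‖π a Ξ‖ ^ 2 := by
      rw [← mul_le_mul_iff_right₀ hc]
      calc c * ‖ε a‖ ^ 2 ≤ ‖π a Ξ‖ ^ 2 := h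
        _ = c * (c⁻¹ * ‖π a Ξ‖ ^ 2) := by field_simp
    have h2 : ‖ε a‖ ≤ Real.sqrt (c⁻¹ * ‖π a Ξ‖ ^ 2) := by
      rw [← Real.sqrt_sq (norm_nonneg _)]
      exact Real.sqrt_le_sqrt h1
    calc ‖ε a‖ ≤ Real.sqrt (c⁻¹ * ‖π a Ξ‖ ^ 2) := h2
      _ = Real.sqrt c⁻¹ * ‖π a Ξ‖ := by
          rw [Real.sqrt_mul (by positivity), Real.sqrt_sq (norm_nonneg _)]
  -- ker T ≤ ker ε
  have hker : LinearMap.ker T ≤ LinearMap.ker (ε : A →ₗ[ℂ] ℂ) := by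
    intro a ha
    have hTa : π a Ξ = 0 := ha
    have := keynorm a
    rw [hTa, norm_zero, mul_zero] at this
    have : ‖ε a‖ = 0 := le_antisymm this (norm_nonneg _)
    simpa [norm_eq_zero] using this
  -- functional on the range of T
  set g₀ : A ⧸ LinearMap.ker T →ₗ[ℂ] ℂ := (LinearMap.ker T).liftQ (ε : A →ₗ[ℂ] ℂ) hker
    with hg₀
  set g₁ : LinearMap.range T →ₗ[ℂ] ℂ :=
    g₀.comp (LinearMap.quotKerEquivRange T).symm.toLinearMap with hg₁
  have hg₁val : ∀ a : A, g₁ ⟨T a, LinearMap.mem_range_self T a⟩ = ε a := by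
    intro a
    simp only [hg₁, LinearMap.comp_apply, LinearEquiv.coe_toLinearMap]
    rw [LinearMap.quotKerEquivRange_symm_apply_image]
    simp [hg₀]
  have hg₁bound : ∀ x : LinearMap.range T, ‖g₁ x‖ ≤ Real.sqrt c⁻¹ * ‖x‖ := by
    rintro ⟨x, hx⟩
    obtain ⟨a, rfl⟩ := hx
    rw [hg₁val a]
    exact keynorm a
  set G : (LinearMap.range T) →L[ℂ] ℂ := g₁.mkContinuous _ hg₁bound with hG
  obtain ⟨F, hFext, _⟩ := exists_extension_norm_eq (LinearMap.range T) G
  have hF : ∀ a : A, F (π a Ξ) = ε a := by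
    intro a
    have h := hFext ⟨T a, LinearMap.mem_range_self T a⟩
    have hGg : G ⟨T a, LinearMap.mem_range_self T a⟩ = ε a := hg₁val a
    rw [hGg] at h
    exact h
  -- Riesz representation
  set w : H := (InnerProductSpace.toDual ℂ H).symm F with hw
  have hwinner : ∀ x : H, ⟪w, x⟫_ℂ = F x := fun x =>
    InnerProductSpace.toDual_symm_apply
  -- eigenvector property for w
  have heig : ∀ b : A, π b w = ε b • w := by
    intro b
    have hdense : ∀ x ∈ Set.range fun a : A => π a Ξ,
        ⟪π b w - ε b • w, x⟫_ℂ = 0 := by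
      rintro x ⟨a, rfl⟩
      have hadj : π b = ContinuousLinearMap.adjoint (π (star b)) := by
        rw [← ContinuousLinearMap.star_eq_adjoint, ← map_star, star_star]
      have h1 : ⟪π b w, π a Ξ⟫_ℂ = ⟪w, π (star b) (π a Ξ)⟫_ℂ := by
        rw [hadj, ContinuousLinearMap.adjoint_inner_left]
      have h2 : (⟪w, π (star b) (π a Ξ)⟫_ℂ) = ε (star b * a) := by
        have : π (star b) (π a Ξ) = π (star b * a) Ξ := by
          rw [map_mul]; rfl
        rw [this, hwinner, hF]
      have h3 : ⟪ε b • w, π a Ξ⟫_ℂ = star (ε b) * ε a := by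
        rw [inner_smul_left, hwinner, hF]; rfl
      rw [inner_sub_left, h1, h2, h3, map_mul, map_star]
      ring
    have : π b w - ε b • w = 0 := by
      have hcont : Continuous fun x : H => ⟪π b w - ε b • w, x⟫_ℂ :=
        continuous_const.inner continuous_id
      have hzero : ∀ x : H, ⟪π b w - ε b • w, x⟫_ℂ = 0 := by
        intro x
        have hclosed : IsClosed {x : H | ⟪π b w - ε b • w, x⟫_ℂ = 0} :=
          isClosed_eq hcont continuous_const
        have hsub : Set.range (fun a : A => π a Ξ) ⊆
            {x : H | ⟪π b w - ε b • w, x⟫_ℂ = 0} := fun x hx => hdense x hx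
        have := hclosed.closure_subset_iff.mpr hsub
        have hall : (Set.univ : Set H) ⊆ {x : H | ⟪π b w - ε b • w, x⟫_ℂ = 0} := by
          rw [← hcyc.closure_eq]; exact this
        exact hall (Set.mem_univ x)
      have := hzero (π b w - ε b • w)
      rwa [inner_self_eq_zero] at this
    exact sub_eq_zero.mp this
  -- w is nonzero
  have hwΞ : ⟪w, Ξ⟫_ℂ = 1 := by
    have h1 : π (1 : A) Ξ = Ξ := by rw [map_one]; rfl
    have := hF (1 : A)
    rw [h1] at this
    rw [hwinner]; rw [this, map_one]
  have hwne : w ≠ 0 := by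
    intro h
    rw [h, inner_zero_left] at hwΞ
    exact one_ne_zero hwΞ.symm
  have hnorm : ‖w‖ ≠ 0 := norm_ne_zero_iff.mpr hwne
  refine ⟨(‖w‖ : ℂ)⁻¹ • w, ?_, ?_⟩
  · rw [norm_smul]
    simp [hnorm]
  · intro a
    rw [map_smul, heig a, smul_comm]
end

section
/- Let A be a unital complex *-algebra, H a complex Hilbert space, π : A → B(H) a unital *-homomorphism, and ε : A → ℂ a unital *-homomorphism (character). Assume ε is unbounded with respect to the seminorm a ↦ ‖π(a)‖, i.e. there is no constant C ≥ 0 with |ε(a)| ≤ C‖π(a)‖ for all a ∈ A. Let H̃ = H ⊕ ℂ be the Hilbert space direct sum, and define the representation π̃ : A → B(H̃) by π̃(a)(ξ, z) = (π(a)ξ, ε(a)z). Then: (1) the orthogonal projection P of H̃ onto the summand {0} ⊕ ℂ belongs to the norm closure of π̃(A) in B(H̃); and (2) the norm closure of π̃(A) equals { b ⊕ z·1 : b in the norm closure of π(A), z ∈ ℂ }, so the closure of π̃(A) is *-isomorphic to the direct sum of ℂP and the norm closure of π(A). -/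
open ContinuousLinearMap

lemma WithLp.equiv_fst {α β : Type*} (x : WithLp 2 (α × β)) :
    (WithLp.equiv 2 (α × β) x).fst = x.fst := rfl
lemma WithLp.equiv_snd {α β : Type*} (x : WithLp 2 (α × β)) :
    (WithLp.equiv 2 (α × β) x).snd = x.snd := rfl
lemma WithLp.equiv_add {V : Type*} [AddCommGroup V] (x y : WithLp 2 V) :
    WithLp.equiv 2 V (x + y) = WithLp.equiv 2 V x + WithLp.equiv 2 V y := rfl
lemma WithLp.equiv_sub {V : Type*} [AddCommGroup V] (x y : WithLp 2 V) :
    WithLp.equiv 2 V (x - y) = WithLp.equiv 2 V x - WithLp.equiv 2 V y := rfl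
lemma WithLp.equiv_smul {K V : Type*} [SMul K V] (c : K) (x : WithLp 2 V) :
    WithLp.equiv 2 V (c • x) = c • WithLp.equiv 2 V x := rfl

/-- Norm bound for a "block diagonal" operator whose second block vanishes. -/
lemma aux_norm_le {H : Type*} [NormedAddCommGroup H] [InnerProductSpace ℂ H]
    (D : WithLp 2 (H × ℂ) →L[ℂ] WithLp 2 (H × ℂ)) (c : H →L[ℂ] H)
    (hD : ∀ v : WithLp 2 (H × ℂ),
      WithLp.equiv 2 (H × ℂ) (D v) = (c ((WithLp.equiv 2 (H × ℂ) v).1), 0)) :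
    ‖D‖ ≤ ‖c‖ := by
  refine ContinuousLinearMap.opNorm_le_bound _ (norm_nonneg c) fun v => ?_
  have h1 : (D v).fst = c v.fst := by
    have := congrArg Prod.fst (hD v)
    simpa [WithLp.equiv_fst] using this
  have h2 : (D v).snd = 0 := by
    have := congrArg Prod.snd (hD v)
    simpa [WithLp.equiv_snd] using this
  have hDv : ‖D v‖ = ‖c v.fst‖ := by
    rw [WithLp.prod_norm_eq_of_L2, h1, h2]
    simp [Real.sqrt_sq (norm_nonneg _)]
  have hv1 : ‖v.fst‖ ≤ ‖v‖ := by
    have hsq := WithLp.prod_norm_sq_eq_of_L2 v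
    nlinarith [norm_nonneg v, norm_nonneg v.fst, norm_nonneg v.snd, sq_nonneg ‖v.snd‖]
  calc ‖D v‖ = ‖c v.fst‖ := hDv
    _ ≤ ‖c‖ * ‖v.fst‖ := c.le_opNorm _
    _ ≤ ‖c‖ * ‖v‖ := by
        exact mul_le_mul_of_nonneg_left hv1 (norm_nonneg c)

set_option maxHeartbeats 1000000 in
/-- Let `A` be a unital complex *-algebra, `π : A → B(H)` a unital
*-homomorphism and `ε : A → ℂ` a character which is unbounded with respect to the
seminorm `a ↦ ‖π(a)‖`. Let `H̃ = H ⊕ ℂ` and `π̃(a)(ξ, z) = (π(a)ξ, ε(a)z)`. Then (1) the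
orthogonal projection `P` of `H̃` onto `{0} ⊕ ℂ` lies in the norm closure of `π̃(A)` in
`B(H̃)`, and (2) the norm closure of `π̃(A)` equals `{ b ⊕ z·1 : b ∈ closure π(A), z ∈ ℂ }`. -/
theorem stmt_10 {A : Type*} [Ring A] [StarRing A] [Algebra ℂ A] [StarModule ℂ A]
    {H : Type*} [NormedAddCommGroup H] [InnerProductSpace ℂ H] [CompleteSpace H]
    (π : A →⋆ₐ[ℂ] (H →L[ℂ] H)) (ε : A →⋆ₐ[ℂ] ℂ)
    (hε : ¬ ∃ C : ℝ, 0 ≤ C ∧ ∀ a : A, ‖ε a‖ ≤ C * ‖π a‖)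
    (πt : A → (WithLp 2 (H × ℂ) →L[ℂ] WithLp 2 (H × ℂ)))
    (hπt : ∀ (a : A) (v : WithLp 2 (H × ℂ)),
      WithLp.equiv 2 (H × ℂ) (πt a v)
        = (π a (WithLp.equiv 2 (H × ℂ) v).1, ε a • (WithLp.equiv 2 (H × ℂ) v).2))
    (P : WithLp 2 (H × ℂ) →L[ℂ] WithLp 2 (H × ℂ))
    (hP : ∀ v : WithLp 2 (H × ℂ),
      WithLp.equiv 2 (H × ℂ) (P v) = (0, (WithLp.equiv 2 (H × ℂ) v).2)) :
    P ∈ closure (Set.range πt) ∧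
    closure (Set.range πt)
      = { T : WithLp 2 (H × ℂ) →L[ℂ] WithLp 2 (H × ℂ) |
          ∃ b ∈ closure (Set.range fun a : A => π a), ∃ z : ℂ,
            ∀ v : WithLp 2 (H × ℂ),
              WithLp.equiv 2 (H × ℂ) (T v)
                = (b (WithLp.equiv 2 (H × ℂ) v).1, z • (WithLp.equiv 2 (H × ℂ) v).2) } := by
  classical
  set Ht := WithLp 2 (H × ℂ) with hHt
  set eq2 : Ht ≃ H × ℂ := WithLp.equiv 2 (H × ℂ) with heq2
  -- Part 1 : P is in the closure of the range of πt
  have part1 : P ∈ closure (Set.range πt) := by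
    rw [Metric.mem_closure_iff]
    intro δ hδ
    push_neg at hε
    obtain ⟨a, ha⟩ := hε δ⁻¹ (by positivity)
    have hne : ε a ≠ 0 := by
      intro h
      rw [h] at ha
      simp only [norm_zero] at ha
      have : 0 ≤ δ⁻¹ * ‖π a‖ := by positivity
      linarith
    set b : A := (ε a)⁻¹ • a with hbdef
    have hεb : ε b = 1 := by
      simp [hbdef, map_smul, smul_eq_mul, inv_mul_cancel₀ hne]
    have hπb : ‖π b‖ < δ := by
      have h1 : π b = (ε a)⁻¹ • π a := by simp [hbdef, map_smul]
      have h2 : ‖π b‖ = (‖ε a‖)⁻¹ * ‖π a‖ := by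
        rw [h1, norm_smul, norm_inv]
      have habs : 0 < ‖ε a‖ := by
        simpa [norm_pos_iff] using hne
      rw [h2]
      rw [inv_mul_lt_iff₀ habs]
      have := mul_lt_mul_of_pos_left ha hδ
      rw [← mul_assoc, mul_inv_cancel₀ hδ.ne', one_mul] at this
      linarith [this]
    refine ⟨πt b, ⟨b, rfl⟩, ?_⟩
    have hdiff : ∀ v : Ht, eq2 ((πt b - P) v) = (π b (eq2 v).1, 0) := by
      intro v
      have : (πt b - P) v = πt b v - P v := rfl
      rw [this, heq2, WithLp.equiv_sub, hπt, hP, hεb, one_smul]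
      simp [Prod.mk_sub_mk]
      rfl
    have hnorm : ‖πt b - P‖ ≤ ‖π b‖ := aux_norm_le _ _ hdiff
    have : dist P (πt b) = ‖πt b - P‖ := by
      rw [dist_eq_norm, norm_sub_rev]
    rw [this]
    exact lt_of_le_of_lt hnorm hπb
  refine ⟨part1, ?_⟩
  -- auxiliary continuous-linear machinery
  set e : Ht ≃L[ℂ] H × ℂ := WithLp.prodContinuousLinearEquiv 2 ℂ H ℂ with he
  have hee : ∀ v : Ht, e v = eq2 v := fun v => rfl
  have hees : ∀ x : H × ℂ, e.symm x = eq2.symm x := fun x => rfl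
  set ι : H →L[ℂ] Ht := e.symm.toContinuousLinearMap.comp (ContinuousLinearMap.inl ℂ H ℂ)
    with hι
  set pr : Ht →L[ℂ] H := (ContinuousLinearMap.fst ℂ H ℂ).comp e.toContinuousLinearMap
    with hpr
  set Φ : (Ht →L[ℂ] Ht) →L[ℂ] (H →L[ℂ] H) :=
    ((ContinuousLinearMap.compL ℂ H Ht H).flip ι).comp
      (ContinuousLinearMap.compL ℂ Ht Ht H pr) with hΦ
  have hΦ_apply : ∀ (T : Ht →L[ℂ] Ht) (ξ : H), Φ T ξ = (eq2 (T (eq2.symm (ξ, 0)))).1 := by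
    intro T ξ
    simp [hΦ, hpr, hι, ContinuousLinearMap.compL_apply, hee, hees]
  set zf : (Ht →L[ℂ] Ht) → ℂ := fun T => (eq2 (T (eq2.symm (0, 1)))).2 with hzf
  have hzf_cont : Continuous zf := by
    have h1 : Continuous fun T : Ht →L[ℂ] Ht => T (eq2.symm (0, 1)) :=
      (ContinuousLinearMap.apply ℂ Ht (eq2.symm (0, 1))).continuous
    have h2 : Continuous fun T : Ht →L[ℂ] Ht => e (T (eq2.symm (0, 1))) :=
      e.continuous.comp h1
    exact continuous_snd.comp h2
  have hΦπt : ∀ a : A, Φ (πt a) = π a := by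
    intro a
    ext ξ
    rw [hΦ_apply, hπt]
    simp
  have hzfπt : ∀ a : A, zf (πt a) = ε a := by
    intro a
    rw [hzf]
    simp only [hπt]
    simp
  -- The closed set of operators of block diagonal form
  set C2 : Set (Ht →L[ℂ] Ht) :=
    {T | ∀ v : Ht, eq2 (T v) = (Φ T ((eq2 v).1), zf T • (eq2 v).2)} with hC2
  have hC2closed : IsClosed C2 := by
    have : C2 = ⋂ v : Ht, {T | eq2 (T v) = (Φ T ((eq2 v).1), zf T • (eq2 v).2)} := by
      ext T; simp [hC2, Set.mem_iInter]
    rw [this]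
    refine isClosed_iInter fun v => ?_
    have hl : Continuous fun T : Ht →L[ℂ] Ht => eq2 (T v) := by
      have h1 : Continuous fun T : Ht →L[ℂ] Ht => T v :=
        (ContinuousLinearMap.apply ℂ Ht v).continuous
      exact e.continuous.comp h1
    have hr : Continuous fun T : Ht →L[ℂ] Ht => (Φ T ((eq2 v).1), zf T • (eq2 v).2) := by
      have h1 : Continuous fun T : Ht →L[ℂ] Ht => Φ T ((eq2 v).1) :=
        (ContinuousLinearMap.apply ℂ H ((eq2 v).1)).continuous.comp Φ.continuous
      exact h1.prodMk (hzf_cont.smul continuous_const)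
    exact isClosed_eq hl hr
  have hrange_sub : Set.range πt ⊆ C2 := by
    rintro _ ⟨a, rfl⟩ v
    rw [hπt, hΦπt, hzfπt]
  have hclosure_sub : closure (Set.range πt) ⊆ C2 := closure_minimal hrange_sub hC2closed
  -- the submodule generated by the range of πt
  have hπt_add : ∀ a a' : A, πt a + πt a' = πt (a + a') := by
    intro a a'
    ext v
    apply eq2.injective
    have : (πt a + πt a') v = πt a v + πt a' v := rfl
    rw [this, heq2, WithLp.equiv_add, hπt, hπt, hπt]
    simp only [map_add, ContinuousLinearMap.add_apply, Prod.mk_add_mk, smul_eq_mul]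
    rw [Prod.mk.injEq]
    exact ⟨rfl, by ring⟩
  have hπt_zero : πt 0 = 0 := by
    ext v
    apply eq2.injective
    rw [heq2, hπt]
    simp only [map_zero, ContinuousLinearMap.zero_apply, zero_smul]
    rfl
  have hπt_smul : ∀ (c : ℂ) (a : A), c • πt a = πt (c • a) := by
    intro c a
    ext v
    apply eq2.injective
    have : (c • πt a) v = c • (πt a v) := rfl
    rw [this, heq2, WithLp.equiv_smul, hπt, hπt]
    simp only [map_smul, ContinuousLinearMap.smul_apply, Prod.smul_mk, smul_eq_mul]
    rw [Prod.mk.injEq]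
    exact ⟨rfl, by ring⟩
  set N : Submodule ℂ (Ht →L[ℂ] Ht) :=
    { carrier := Set.range πt
      add_mem' := by rintro _ _ ⟨a, rfl⟩ ⟨a', rfl⟩; exact ⟨a + a', (hπt_add a a').symm⟩
      zero_mem' := ⟨0, hπt_zero⟩
      smul_mem' := by rintro c _ ⟨a, rfl⟩; exact ⟨c • a, (hπt_smul c a).symm⟩ } with hN
  set M : Submodule ℂ (Ht →L[ℂ] Ht) := N.topologicalClosure with hM
  have hMcoe : (M : Set (Ht →L[ℂ] Ht)) = closure (Set.range πt) := rfl
  have hPM : P ∈ M := by rw [← SetLike.mem_coe, hMcoe]; exact part1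
  -- Part 2
  apply Set.eq_of_subset_of_subset
  · -- closure ⊆ description
    intro T hT
    have hb : Φ T ∈ closure (Set.range fun a : A => π a) := by
      refine map_mem_closure Φ.continuous hT ?_
      rintro _ ⟨a, rfl⟩
      exact ⟨a, (hΦπt a).symm⟩
    exact ⟨Φ T, hb, zf T, hclosure_sub hT⟩
  · -- description ⊆ closure
    rintro T ⟨b, hb, z, hT⟩
    have hTM : T ∈ (M : Set (Ht →L[ℂ] Ht)) := by
      have hMclosed : IsClosed (M : Set (Ht →L[ℂ] Ht)) := N.isClosed_topologicalClosure
      refine hMclosed.closure_subset ?_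
      rw [Metric.mem_closure_iff]
      intro δ hδ
      obtain ⟨_, ⟨a, rfl⟩, hd⟩ := Metric.mem_closure_iff.mp hb δ hδ
      refine ⟨πt a + (z - ε a) • P, ?_, ?_⟩
      · exact M.add_mem (N.le_topologicalClosure ⟨a, rfl⟩) (M.smul_mem _ hPM)
      · have hdiff : ∀ v : Ht,
            eq2 ((T - (πt a + (z - ε a) • P)) v) = ((b - π a) ((eq2 v).1), 0) := by
          intro v
          have h0 : (T - (πt a + (z - ε a) • P)) v
              = T v - (πt a v + (z - ε a) • P v) := rfl
          rw [h0, heq2, WithLp.equiv_sub, WithLp.equiv_add, WithLp.equiv_smul, hπt, hP]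
          rw [← heq2, hT v]
          simp only [Prod.smul_mk, smul_zero, Prod.mk_add_mk, Prod.mk_sub_mk,
            ContinuousLinearMap.sub_apply, add_zero, zero_add]
          rw [Prod.mk.injEq]
          refine ⟨rfl, ?_⟩
          rw [sub_smul]
          ring
        have hnorm : ‖T - (πt a + (z - ε a) • P)‖ ≤ ‖b - π a‖ := aux_norm_le _ _ hdiff
        have : dist T (πt a + (z - ε a) • P) = ‖T - (πt a + (z - ε a) • P)‖ :=
          dist_eq_norm _ _
        rw [this]
        have : ‖b - π a‖ = dist b (π a) := (dist_eq_norm _ _).symm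
        calc ‖T - (πt a + (z - ε a) • P)‖ ≤ ‖b - π a‖ := hnorm
          _ = dist b (π a) := (dist_eq_norm _ _).symm
          _ < δ := hd
    rw [← hMcoe]
    exact hTM
end
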